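/- The statistic rmin on inversion sequences of length n is Stirling: for every k, the number of inversion sequences s of length n with rmin(s) = k equals the number of permutations of [n] with exactly k right-to-left maxima, which is the signless Stirling number of the first kind c(n,k). -/

import Mathlib

open Finset

/-- The next index (used for descent/ascent definitions). -/
def nxt {n : ℕ} (i : Fin n) : Fin n := ⟨(i.1 + 1) % n, Nat.mod_lt _ i.pos⟩

/-- Number of descents of a permutation of `Fin n`. -/
def desP {n : ℕ} (π : Equiv.Perm (Fin n)) : ℕ :=
  (univ.filter fun i : Fin n => i.1 + 1 < n ∧ π (nxt i) < π i).card

/-- Number of inverse descents. -/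
def idesP {n : ℕ} (π : Equiv.Perm (Fin n)) : ℕ := desP π⁻¹

/-- Number of left-to-right maxima. -/
def lmaxP {n : ℕ} (π : Equiv.Perm (Fin n)) : ℕ :=
  (univ.filter fun i : Fin n => ∀ j, j < i → π j < π i).card

/-- Number of left-to-right minima. -/
def lminP {n : ℕ} (π : Equiv.Perm (Fin n)) : ℕ :=
  (univ.filter fun i : Fin n => ∀ j, j < i → π i < π j).card

/-- Number of right-to-left maxima. -/
def rmaxP {n : ℕ} (π : Equiv.Perm (Fin n)) : ℕ :=
  (univ.filter fun i : Fin n => ∀ j, i < j → π j < π i).card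

/-- Inversion sequences of length `n`, encoded as functions `Fin n → Fin n`
with `s i ≤ i` (0-based version of `0 ≤ sᵢ < i`). -/
def InvSeqs (n : ℕ) : Finset (Fin n → Fin n) :=
  univ.filter fun s => ∀ i : Fin n, (s i : ℕ) ≤ i.1

/-- Number of ascents of an inversion sequence. -/
def ascI {n : ℕ} (s : Fin n → Fin n) : ℕ :=
  (univ.filter fun i : Fin n => i.1 + 1 < n ∧ s i < s (nxt i)).card

/-- Number of distinct (nonzero) entries: `|{s₁,…,sₙ}| - 1`. -/
def distI {n : ℕ} (s : Fin n → Fin n) : ℕ := (univ.image s).card - 1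

/-- Number of zero entries. -/
def zeroI {n : ℕ} (s : Fin n → Fin n) : ℕ :=
  (univ.filter fun i : Fin n => (s i : ℕ) = 0).card

/-- Number of maximal entries (`sᵢ = i - 1`, 0-based `s i = i`). -/
def maxI {n : ℕ} (s : Fin n → Fin n) : ℕ :=
  (univ.filter fun i : Fin n => (s i : ℕ) = i.1).card

/-- The set of values of right-to-left minima. -/
def rminValues {n : ℕ} (s : Fin n → Fin n) : Finset ℕ :=
  (univ.filter fun i : Fin n => ∀ j, i < j → s i < s j).image fun i => (s i : ℕ)

/-- Number of right-to-left minima values. -/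
def rminI {n : ℕ} (s : Fin n → Fin n) : ℕ := (rminValues s).card

/-- Number of initial consecutive zeros. -/
def czeroI {n : ℕ} (s : Fin n → Fin n) : ℕ :=
  (univ.filter fun i : Fin n => ∀ j, j ≤ i → (s j : ℕ) = 0).card

/-- Length of the initial run of maximal entries `0,1,2,…`. -/
def cmaxI {n : ℕ} (s : Fin n → Fin n) : ℕ :=
  (univ.filter fun i : Fin n => ∀ j, j ≤ i → (s j : ℕ) = j.1).card

/-- The entry after the last zero (0 if `s` ends with a zero). -/
def ealzI {n : ℕ} (s : Fin n → Fin n) : ℕ :=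
  (univ.filter fun i : Fin n => (s i : ℕ) = 0 ∧ ∀ j, i < j → (s j : ℕ) ≠ 0).sum
    fun i => if h : i.1 + 1 < n then (s ⟨i.1 + 1, h⟩ : ℕ) else 0

/-- The entry after the last maximal entry of the initial run (0 if none). -/
def ealmI {n : ℕ} (s : Fin n → Fin n) : ℕ :=
  if h : cmaxI s < n then (s ⟨cmaxI s, h⟩ : ℕ) else 0

/-- The reverse of the complement of `π`. -/
def crev {n : ℕ} (π : Equiv.Perm (Fin n)) : Equiv.Perm (Fin n) :=
  Fin.revPerm * π * Fin.revPerm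

def codeF {n : ℕ} (π : Equiv.Perm (Fin n)) (i : Fin n) : Fin n :=
  ⟨(univ.filter fun j : Fin n => j < i ∧ π i < π j).card,
   lt_of_le_of_lt
     (le_trans (Finset.card_le_card (fun j hj => by
        simp only [mem_filter, mem_univ, true_and] at hj
        exact Finset.mem_Iio.2 hj.1))
      (le_of_eq (Fin.card_Iio _))) i.isLt⟩

lemma codeF_aux {n : ℕ} (π π' : Equiv.Perm (Fin n)) {i : Fin n}
    (hlt : π i < π' i) (hagree : ∀ j, i < j → π j = π' j) :
    (codeF π' i : ℕ) < (codeF π i : ℕ) := by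
  show (univ.filter fun l : Fin n => l < i ∧ π' i < π' l).card <
    (univ.filter fun l : Fin n => l < i ∧ π i < π l).card
  set p : Fin n := π⁻¹ (π' i) with hp
  have hπp : π p = π' i := π.apply_symm_apply _
  have hpi : p < i := by
    rcases lt_trichotomy p i with h' | h' | h'
    · exact h'
    · exact absurd (h' ▸ hπp) (ne_of_lt hlt)
    · have := hagree p h'
      rw [hπp] at this
      exact absurd (π'.injective this.symm).symm (ne_of_lt h')
  set φ : Fin n → Fin n := fun j => π⁻¹ (π' j) with hφ
  have hφap : ∀ j, π (φ j) = π' j := fun j => π.apply_symm_apply _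
  have hφinj : Function.Injective φ := fun a b hab => π'.injective (by
    rw [← hφap a, ← hφap b, hab])
  have hsub : insert p ((univ.filter fun l : Fin n => l < i ∧ π' i < π' l).image φ) ⊆
      (univ.filter fun l : Fin n => l < i ∧ π i < π l) := by
    intro l hl
    rcases Finset.mem_insert.1 hl with rfl | hl
    · exact Finset.mem_filter.2 ⟨mem_univ _, hpi, hπp ▸ hlt⟩
    · obtain ⟨a, ha, rfl⟩ := Finset.mem_image.1 hl
      simp only [mem_filter, mem_univ, true_and] at ha
      have hval : π i < π (φ a) := by rw [hφap]; exact lt_trans hlt ha.2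
      have hφa : φ a < i := by
        rcases lt_trichotomy (φ a) i with h' | h' | h'
        · exact h'
        · exact absurd (h' ▸ hval) (lt_irrefl _)
        · have := hagree (φ a) h'
          rw [hφap] at this
          have : φ a = a := (π'.injective this).symm
          exact absurd (this ▸ h') (not_lt.2 (le_of_lt ha.1))
      exact Finset.mem_filter.2 ⟨mem_univ _, hφa, hval⟩
  have hpnot : p ∉ (univ.filter fun l : Fin n => l < i ∧ π' i < π' l).image φ := by
    intro hmem
    obtain ⟨a, ha, hap⟩ := Finset.mem_image.1 hmem
    simp only [mem_filter, mem_univ, true_and] at ha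
    have : π' a = π' i := by rw [← hφap a, hap, hπp]
    exact absurd (π'.injective this ▸ ha.1) (lt_irrefl i)
  calc (univ.filter fun l : Fin n => l < i ∧ π' i < π' l).card
      = ((univ.filter fun l : Fin n => l < i ∧ π' i < π' l).image φ).card :=
        (Finset.card_image_of_injective _ hφinj).symm
    _ < (insert p ((univ.filter fun l : Fin n => l < i ∧ π' i < π' l).image φ)).card := by
        rw [Finset.card_insert_of_notMem hpnot]; omega
    _ ≤ _ := Finset.card_le_card hsub

lemma codeF_inj {n : ℕ} : Function.Injective (codeF (n := n)) := by
  intro π π' h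
  by_contra hne
  have hne' : ∃ i, π i ≠ π' i := by
    by_contra hc; push_neg at hc
    exact hne (Equiv.ext hc)
  set D := univ.filter fun i : Fin n => π i ≠ π' i with hD
  have hDne : D.Nonempty := by
    obtain ⟨i, hi⟩ := hne'
    exact ⟨i, Finset.mem_filter.2 ⟨mem_univ _, hi⟩⟩
  set i := D.max' hDne with hi
  have himem := D.max'_mem hDne
  simp only [hD, mem_filter, mem_univ, true_and] at himem
  have hagree : ∀ j, i < j → π j = π' j := by
    intro j hj
    by_contra hc
    exact absurd (Finset.le_max' D j (Finset.mem_filter.2 ⟨mem_univ _, hc⟩)) (not_le.2 hj)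
  have heq : (codeF π i : ℕ) = (codeF π' i : ℕ) := by rw [h]
  rcases lt_trichotomy (π i) (π' i) with h' | h' | h'
  · exact absurd heq (ne_of_gt (codeF_aux π π' h' hagree))
  · exact himem h'
  · exact absurd heq (ne_of_lt (codeF_aux π' π h' (fun j hj => (hagree j hj).symm)))

-- rmax position implies rmin position of code
lemma codeF_lt_of_rmax {n : ℕ} (π : Equiv.Perm (Fin n)) {i : Fin n}
    (h : ∀ j, i < j → π j < π i) {j : Fin n} (hij : i < j) :
    codeF π i < codeF π j := by
  rw [Fin.lt_def]
  show (univ.filter fun l : Fin n => l < i ∧ π i < π l).card <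
    (univ.filter fun l : Fin n => l < j ∧ π j < π l).card
  have hsub : insert i (univ.filter fun l : Fin n => l < i ∧ π i < π l) ⊆
      (univ.filter fun l : Fin n => l < j ∧ π j < π l) := by
    intro l hl
    rcases Finset.mem_insert.1 hl with rfl | hl
    · exact Finset.mem_filter.2 ⟨mem_univ _, hij, h j hij⟩
    · simp only [mem_filter, mem_univ, true_and] at hl
      exact Finset.mem_filter.2 ⟨mem_univ _, lt_trans hl.1 hij, lt_trans (h j hij) hl.2⟩
  have hnot : i ∉ (univ.filter fun l : Fin n => l < i ∧ π i < π l) := by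
    simp
  calc (univ.filter fun l : Fin n => l < i ∧ π i < π l).card
      < (insert i (univ.filter fun l : Fin n => l < i ∧ π i < π l)).card := by
        rw [Finset.card_insert_of_notMem hnot]; omega
    _ ≤ _ := Finset.card_le_card hsub

lemma rmax_of_codeF {n : ℕ} (π : Equiv.Perm (Fin n)) {i : Fin n}
    (h : ∀ j, i < j → codeF π i < codeF π j) : ∀ j, i < j → π j < π i := by
  by_contra hc
  push_neg at hc
  obtain ⟨j₁, hij₁, hj₁⟩ := hc
  have hj₁' : π i < π j₁ := lt_of_le_of_ne hj₁ (fun he => absurd (π.injective he) (ne_of_lt hij₁))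
  set T := univ.filter fun j : Fin n => i < j ∧ π i < π j with hT
  have hTne : T.Nonempty := ⟨j₁, Finset.mem_filter.2 ⟨mem_univ _, hij₁, hj₁'⟩⟩
  set j₀ := T.min' hTne with hj₀
  have hj₀mem := T.min'_mem hTne
  simp only [hT, mem_filter, mem_univ, true_and] at hj₀mem
  have hsub : (univ.filter fun l : Fin n => l < j₀ ∧ π j₀ < π l) ⊆
      (univ.filter fun l : Fin n => l < i ∧ π i < π l) := by
    intro l hl
    simp only [mem_filter, mem_univ, true_and] at hl
    have hpl : π i < π l := lt_trans hj₀mem.2 hl.2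
    have hli : l < i := by
      rcases lt_trichotomy l i with h' | rfl | h'
      · exact h'
      · exact absurd hpl (lt_irrefl _)
      · exact absurd hl.1 (not_lt.2 (Finset.min'_le T l (Finset.mem_filter.2 ⟨mem_univ _, h', hpl⟩)))
    exact Finset.mem_filter.2 ⟨mem_univ _, hli, hpl⟩
  have := h j₀ hj₀mem.1
  rw [Fin.lt_def] at this
  exact absurd (Finset.card_le_card hsub) (not_le.2 this)

lemma codeF_le' {n : ℕ} (π : Equiv.Perm (Fin n)) (i : Fin n) : (codeF π i : ℕ) ≤ i.1 :=
  le_trans (Finset.card_le_card (s := univ.filter fun j : Fin n => j < i ∧ π i < π j) (fun j hj => by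
    simp only [mem_filter, mem_univ, true_and] at hj
    exact Finset.mem_Iio.2 hj.1)) (le_of_eq (Fin.card_Iio _))

lemma codeF_mem {n : ℕ} (π : Equiv.Perm (Fin n)) : codeF π ∈ InvSeqs n :=
  Finset.mem_filter.2 ⟨mem_univ _, fun i => codeF_le' π i⟩

lemma rminI_eq_card {n : ℕ} (s : Fin n → Fin n) :
    rminI s = (univ.filter fun i : Fin n => ∀ j, i < j → s i < s j).card := by
  unfold rminI rminValues
  apply Finset.card_image_of_injOn
  intro i hi i' hi' hval
  simp only [coe_filter, mem_univ, true_and, Set.mem_setOf_eq] at hi hi'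
  by_contra hne
  rcases lt_or_gt_of_ne hne with h' | h'
  · exact absurd hval (ne_of_lt (by exact_mod_cast hi i' h'))
  · exact absurd hval (ne_of_gt (by exact_mod_cast hi' i h'))

lemma rmaxP_eq_rminI {n : ℕ} (π : Equiv.Perm (Fin n)) : rmaxP π = rminI (codeF π) := by
  rw [rminI_eq_card]
  unfold rmaxP
  apply congrArg
  apply Finset.filter_congr
  intro i _
  exact ⟨fun h j hj => codeF_lt_of_rmax π h hj, fun h => rmax_of_codeF π h⟩

lemma zeroI_codeF {n : ℕ} (π : Equiv.Perm (Fin n)) : zeroI (codeF π) = lmaxP π := by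
  unfold zeroI lmaxP
  apply congrArg
  apply Finset.filter_congr
  intro i _
  show (univ.filter fun j : Fin n => j < i ∧ π i < π j).card = 0 ↔ _
  rw [Finset.card_eq_zero, Finset.filter_eq_empty_iff]
  constructor
  · intro h j hj
    have := h (Finset.mem_univ j)
    push_neg at this
    have h2 := this hj
    rcases lt_trichotomy (π j) (π i) with h' | h' | h'
    · exact h'
    · exact absurd (π.injective h') (ne_of_lt hj)
    · exact absurd h' (not_lt.2 h2)
  · intro h j _
    rintro ⟨hji, hπ⟩
    exact absurd hπ (not_lt.2 (le_of_lt (h j hji)))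

lemma invSeqs_eq (n : ℕ) : InvSeqs n = Fintype.piFinset fun i : Fin n => Finset.Iic i := by
  ext s
  simp only [InvSeqs, mem_filter, mem_univ, true_and, Fintype.mem_piFinset,
    Finset.mem_Iic, Fin.le_def]

lemma invSeqs_card (n : ℕ) : (InvSeqs n).card = n.factorial := by
  rw [invSeqs_eq, Fintype.card_piFinset]
  simp only [Fin.card_Iic]
  rw [Fin.prod_univ_eq_prod_range (fun j => j + 1) n]
  exact Finset.prod_range_add_one_eq_factorial n

lemma codeF_image (n : ℕ) :
    (univ : Finset (Equiv.Perm (Fin n))).image codeF = InvSeqs n := by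
  apply Finset.eq_of_subset_of_card_le
  · intro s hs
    obtain ⟨π, _, rfl⟩ := Finset.mem_image.1 hs
    exact codeF_mem π
  · rw [Finset.card_image_of_injective _ codeF_inj, invSeqs_card, card_univ,
      Fintype.card_perm, Fintype.card_fin]

lemma E1 (n k : ℕ) :
    ((InvSeqs n).filter fun s => rminI s = k).card =
      (univ.filter fun π : Equiv.Perm (Fin n) => rmaxP π = k).card := by
  symm
  apply Finset.card_bij (fun π _ => codeF π)
  · intro π hπ
    simp only [mem_filter, mem_univ, true_and] at hπ ⊢
    exact ⟨codeF_mem π, by rw [← rmaxP_eq_rminI, hπ]⟩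
  · intro π _ π' _ h
    exact codeF_inj h
  · intro s hs
    simp only [mem_filter, mem_univ, true_and] at hs
    have : s ∈ (univ : Finset (Equiv.Perm (Fin n))).image codeF := (codeF_image n) ▸ hs.1
    obtain ⟨π, _, rfl⟩ := Finset.mem_image.1 this
    exact ⟨π, Finset.mem_filter.2 ⟨mem_univ _, by rw [rmaxP_eq_rminI, hs.2]⟩, rfl⟩

lemma lmaxP_rev {n : ℕ} (π : Equiv.Perm (Fin n)) : lmaxP (π * Fin.revPerm) = rmaxP π := by
  unfold lmaxP rmaxP
  apply Finset.card_nbij (fun i => i.rev)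
  · intro i hi
    simp only [mem_coe, mem_filter, mem_univ, true_and, Equiv.Perm.mul_apply, Fin.revPerm_apply] at hi ⊢
    intro j hj
    have h1 : j.rev < i := Fin.rev_lt_rev.1 (by rwa [Fin.rev_rev])
    have := hi j.rev h1
    rwa [Fin.rev_rev] at this
  · exact Fin.rev_injective.injOn
  · intro b hb
    simp only [coe_filter, mem_univ, true_and, Set.mem_setOf_eq, Set.mem_image] at hb ⊢
    refine ⟨b.rev, ?_, Fin.rev_rev b⟩
    intro j hj
    simp only [Equiv.Perm.mul_apply, Fin.revPerm_apply]
    rw [Fin.rev_rev]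
    exact hb _ (Fin.rev_lt_rev.1 (by rwa [Fin.rev_rev]))

lemma revPerm_mul_revPerm (n : ℕ) : (Fin.revPerm : Equiv.Perm (Fin n)) * Fin.revPerm = 1 := by
  ext i
  simp [Fin.rev_rev]

lemma E2a (n k : ℕ) :
    (univ.filter fun π : Equiv.Perm (Fin n) => rmaxP π = k).card =
      (univ.filter fun π : Equiv.Perm (Fin n) => lmaxP π = k).card := by
  apply Finset.card_nbij (fun π => π * Fin.revPerm)
  · intro π hπ
    simp only [mem_coe, mem_filter, mem_univ, true_and] at hπ ⊢
    rw [lmaxP_rev, hπ]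
  · intro π _ π' _ h
    simpa using mul_right_cancel h
  · intro σ hσ
    simp only [coe_filter, mem_univ, true_and, Set.mem_setOf_eq, Set.mem_image] at hσ ⊢
    refine ⟨σ * Fin.revPerm, ?_, by rw [mul_assoc, revPerm_mul_revPerm, mul_one]⟩
    rw [← lmaxP_rev, mul_assoc, revPerm_mul_revPerm, mul_one, hσ]

lemma E2b (n k : ℕ) :
    (univ.filter fun π : Equiv.Perm (Fin n) => lmaxP π = k).card =
      ((InvSeqs n).filter fun s => zeroI s = k).card := by
  apply Finset.card_bij (fun π _ => codeF π)
  · intro π hπ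
    simp only [mem_filter, mem_univ, true_and] at hπ ⊢
    exact ⟨codeF_mem π, by rw [zeroI_codeF, hπ]⟩
  · intro π _ π' _ h
    exact codeF_inj h
  · intro s hs
    simp only [mem_filter, mem_univ, true_and] at hs
    have : s ∈ (univ : Finset (Equiv.Perm (Fin n))).image codeF := (codeF_image n) ▸ hs.1
    obtain ⟨π, _, rfl⟩ := Finset.mem_image.1 this
    exact ⟨π, Finset.mem_filter.2 ⟨mem_univ _, by rw [← zeroI_codeF, hs.2]⟩, rfl⟩

open Polynomial in
lemma E2c (n k : ℕ) :
    ((InvSeqs n).filter fun s => zeroI s = k).card =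
      ((∏ j ∈ Finset.range n, (X + C j) : Polynomial ℕ)).coeff k := by
  have h2 : ∀ i : Fin n, (X + C (i : ℕ) : Polynomial ℕ) =
      ∑ x ∈ Finset.Iic i, if (x : ℕ) = 0 then (X : Polynomial ℕ) else 1 := by
    intro i
    rw [Finset.sum_ite, Finset.sum_const, Finset.sum_const]
    have hz : (Finset.Iic i).filter (fun x : Fin n => (x : ℕ) = 0) = {⟨0, i.pos⟩} := by
      ext x
      simp only [mem_filter, Finset.mem_Iic, Finset.mem_singleton]
      constructor
      · rintro ⟨_, hx⟩; exact Fin.ext hx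
      · rintro rfl; exact ⟨Fin.mk_le_of_le_val (Nat.zero_le _), rfl⟩
    have hcards := Finset.card_filter_add_card_filter_not
      (s := Finset.Iic i) (p := fun x : Fin n => (x : ℕ) = 0)
    rw [Fin.card_Iic, hz] at hcards
    simp only [Finset.card_singleton] at hcards
    have hnz : ((Finset.Iic i).filter (fun x : Fin n => ¬(x : ℕ) = 0)).card = i.1 := by omega
    rw [hz, hnz, Finset.card_singleton, one_smul, nsmul_eq_mul, mul_one]
    simp [C_eq_natCast]
  have h1 : (∏ j ∈ Finset.range n, (X + C j) : Polynomial ℕ) =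
      ∑ s ∈ InvSeqs n, X ^ zeroI s := by
    rw [← Fin.prod_univ_eq_prod_range (fun j => (X + C j : Polynomial ℕ)) n]
    rw [Finset.prod_congr rfl (fun i _ => h2 i)]
    rw [Finset.prod_univ_sum (fun i : Fin n => Finset.Iic i)
      (fun _ x => if (x : ℕ) = 0 then (X : Polynomial ℕ) else 1)]
    rw [← invSeqs_eq]
    apply Finset.sum_congr rfl
    intro s _
    rw [Finset.prod_ite (fun _ => (X : Polynomial ℕ)) (fun _ => (1 : Polynomial ℕ))]
    rw [Finset.prod_const, Finset.prod_const, one_pow, mul_one]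
    rfl
  rw [h1, finset_sum_coeff]
  simp_rw [coeff_X_pow]
  rw [Finset.card_filter]
  apply Finset.sum_congr rfl
  intro s _
  simp [eq_comm]

/-- `rmin` on inversion sequences is a Stirling statistic: it is
distributed like `rmax` on permutations, whose distribution is given by the signless
Stirling numbers of the first kind. -/
theorem rmin_is_stirling (n k : ℕ) :
    ((InvSeqs n).filter fun s => rminI s = k).card =
      (univ.filter fun π : Equiv.Perm (Fin n) => rmaxP π = k).card ∧
    (univ.filter fun π : Equiv.Perm (Fin n) => rmaxP π = k).card =
      ((∏ j ∈ Finset.range n, (Polynomial.X + Polynomial.C j) : Polynomial ℕ)).coeff k := by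
  exact ⟨E1 n k, (E2a n k).trans ((E2b n k).trans (E2c n k))⟩
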